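/- Let n be a positive integer and let a₁,…,aₙ and b₁,…,bₙ be positive real numbers. Define T = Σ_{k=1}^n aₖ/bₖ and, for m = 1, 2, 3, S^(m) = Σ_{k=1}^n Σ_{l=1}^n aₖaₗ/(bₖ+bₗ)^m. Then T² ≤ S^(1) + 2·S^(2) + 2·S^(3). -/

import Mathlib

open Real Finset MeasureTheory Set Filter Asymptotics

lemma int_pow_exp (m : ℕ) {c : ℝ} (hc : 0 < c) :
    IntegrableOn (fun t : ℝ => t ^ m * Real.exp (-(c * t))) (Set.Ioi 0) := by
  apply integrable_of_isBigO_exp_neg (half_pos hc)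
    (Continuous.continuousOn (by continuity))
  have h1 : Tendsto (fun t : ℝ => t ^ m * Real.exp (-(c / 2 * t))) atTop (nhds 0) := by
    have h2 : Tendsto (fun t : ℝ => c / 2 * t) atTop atTop :=
      Tendsto.const_mul_atTop (half_pos hc) tendsto_id
    have h3 := (tendsto_pow_mul_exp_neg_atTop_nhds_zero m).comp h2
    have h4 : Tendsto (fun t : ℝ => (2 / c) ^ m * ((c / 2 * t) ^ m * Real.exp (-(c / 2 * t))))
        atTop (nhds ((2 / c) ^ m * 0)) := h3.const_mul _
    rw [mul_zero] at h4
    refine h4.congr fun t => ?_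
    rw [← mul_assoc, ← mul_pow]
    congr 2
    field_simp
  have h5 : (fun t : ℝ => t ^ m * Real.exp (-(c * t))) =O[atTop]
      fun t : ℝ => Real.exp (-(c / 2) * t) := by
    have := (h1.isBigO_one ℝ).mul (isBigO_refl (fun t : ℝ => Real.exp (-(c / 2 * t))) atTop)
    refine (this.congr (fun t => ?_) (fun t => ?_)).trans (isBigO_refl _ _)
    · rw [mul_assoc, ← Real.exp_add]; ring_nf
    · simp only [one_mul]; ring_nf
  exact h5

lemma integral_pow_exp (m : ℕ) {c : ℝ} (hc : 0 < c) :
    ∫ t in Set.Ioi (0:ℝ), t ^ m * Real.exp (-(c * t)) = m.factorial / c ^ (m + 1) := by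
  have h := Real.integral_rpow_mul_exp_neg_mul_Ioi (a := (m : ℝ) + 1) (by positivity) hc
  rw [show ((m : ℝ) + 1 - 1) = (m : ℝ) by ring] at h
  simp_rw [Real.rpow_natCast] at h
  rw [show ((m : ℝ) + 1) = ((m + 1 : ℕ) : ℝ) by push_cast; ring, Real.rpow_natCast] at h
  rw [Nat.cast_add, Nat.cast_one, Real.Gamma_nat_eq_factorial] at h
  rw [h, one_div, inv_pow]
  field_simp

lemma Hder : ∀ x ∈ Set.Ici (0:ℝ), HasDerivAt (fun t : ℝ => -(1 + t)⁻¹) (((1 + x)⁻¹) ^ 2) x := by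
  intro x hx
  have hx0 : (0:ℝ) ≤ x := hx
  have hne : (1:ℝ) + x ≠ 0 := by positivity
  have h := (((hasDerivAt_id x).const_add 1).inv hne).neg
  have h2 : HasDerivAt (fun t : ℝ => -(1 + t)⁻¹) (-(-1 / (1 + id x) ^ 2)) x := h
  exact h2.congr_deriv (by simp only [id, neg_div, neg_neg, one_div, inv_pow])

lemma Htend : Filter.Tendsto (fun t : ℝ => -(1 + t)⁻¹) atTop (nhds 0) := by
  have h : Filter.Tendsto (fun t : ℝ => (1 + t)) atTop atTop :=
    tendsto_atTop_add_const_left _ 1 tendsto_id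
  simpa using h.inv_tendsto_atTop.neg

lemma Hint : IntegrableOn (fun t : ℝ => ((1 + t)⁻¹) ^ 2) (Set.Ioi 0) :=
  integrableOn_Ioi_deriv_of_nonneg' Hder (fun x _ => by positivity) Htend

lemma Hval : ∫ t in Set.Ioi (0:ℝ), ((1 + t)⁻¹) ^ 2 = 1 := by
  have h := integral_Ioi_of_hasDerivAt_of_nonneg' Hder (fun x _ => by positivity) Htend
  simpa using h

lemma aux_int {c : ℝ} (hc : 0 < c) :
    IntegrableOn (fun t : ℝ => (1 + t) ^ 2 * Real.exp (-(c * t))) (Set.Ioi 0) := by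
  have h : (fun t : ℝ => (1 + t) ^ 2 * Real.exp (-(c * t)))
      = fun t => t ^ 0 * Real.exp (-(c * t)) + 2 * (t ^ 1 * Real.exp (-(c * t)))
        + t ^ 2 * Real.exp (-(c * t)) := by funext t; ring
  rw [h]
  exact ((int_pow_exp 0 hc).add ((int_pow_exp 1 hc).const_mul 2)).add (int_pow_exp 2 hc)

lemma aux_val {c : ℝ} (hc : 0 < c) :
    ∫ t in Set.Ioi (0:ℝ), (1 + t) ^ 2 * Real.exp (-(c * t))
      = 1 / c + 2 * (1 / c ^ 2) + 2 * (1 / c ^ 3) := by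
  have h : (fun t : ℝ => (1 + t) ^ 2 * Real.exp (-(c * t)))
      = fun t => t ^ 0 * Real.exp (-(c * t)) + 2 * (t ^ 1 * Real.exp (-(c * t)))
        + t ^ 2 * Real.exp (-(c * t)) := by funext t; ring
  have i1 : IntegrableOn (fun t : ℝ => 2 * (t ^ 1 * Real.exp (-(c * t)))) (Set.Ioi 0) :=
    (int_pow_exp 1 hc).const_mul 2
  have i01 : IntegrableOn
      (fun t : ℝ => t ^ 0 * Real.exp (-(c * t)) + 2 * (t ^ 1 * Real.exp (-(c * t))))
      (Set.Ioi 0) := (int_pow_exp 0 hc).add i1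
  rw [h, MeasureTheory.integral_add i01 (int_pow_exp 2 hc),
    MeasureTheory.integral_add (int_pow_exp 0 hc) i1,
    MeasureTheory.integral_const_mul, integral_pow_exp 0 hc, integral_pow_exp 1 hc,
    integral_pow_exp 2 hc]
  simp [Nat.factorial]
  ring

theorem sum_sq_le_S1_add_two_S2_add_two_S3
    (n : ℕ) (hn : 0 < n) (a b : Fin n → ℝ)
    (ha : ∀ i, 0 < a i) (hb : ∀ i, 0 < b i) :
    (∑ k, a k / b k) ^ 2 ≤
      (∑ k, ∑ l, a k * a l / (b k + b l) ^ 1) +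
      2 * (∑ k, ∑ l, a k * a l / (b k + b l) ^ 2) +
      2 * (∑ k, ∑ l, a k * a l / (b k + b l) ^ 3) := by
  have hc : ∀ k l : Fin n, 0 < b k + b l := fun k l => add_pos (hb k) (hb l)
  set T : ℝ := ∑ k, a k / b k with hT
  set f : ℝ → ℝ := fun t => ∑ k, a k * Real.exp (-(b k * t)) with hf
  set G : ℝ → ℝ := fun t => f t * (1 + t) with hG
  set H : ℝ → ℝ := fun t => (1 + t)⁻¹ with hH
  have hterm : ∀ k : Fin n, IntegrableOn (fun t : ℝ => a k * Real.exp (-(b k * t))) (Set.Ioi 0) :=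
    fun k => by simpa [IntegrableOn] using ((int_pow_exp 0 (hb k)).const_mul (a k))
  have hfint : IntegrableOn f (Set.Ioi 0) := by
    rw [hf]; exact integrable_finset_sum _ fun k _ => hterm k
  have hfval : ∫ t in Set.Ioi (0:ℝ), f t = T := by
    rw [hf, MeasureTheory.integral_finset_sum _ fun k _ => hterm k, hT]
    refine Finset.sum_congr rfl fun k _ => ?_
    rw [MeasureTheory.integral_const_mul]
    have h0 := integral_pow_exp 0 (hb k)
    simp only [pow_zero, one_mul, Nat.factorial_zero, Nat.cast_one, zero_add, pow_one] at h0
    rw [h0, mul_one_div]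
  have hG2 : ∀ t : ℝ, G t ^ 2
      = ∑ k, ∑ l, a k * a l * ((1 + t) ^ 2 * Real.exp (-((b k + b l) * t))) := by
    intro t
    rw [hG]
    show (f t * (1 + t)) ^ 2 = _
    rw [mul_pow, hf]
    show (∑ k, a k * Real.exp (-(b k * t))) ^ 2 * (1 + t) ^ 2 = _
    rw [sq (∑ k, a k * Real.exp (-(b k * t))), Finset.sum_mul_sum, Finset.sum_mul]
    refine Finset.sum_congr rfl fun k _ => ?_
    rw [Finset.sum_mul]
    refine Finset.sum_congr rfl fun l _ => ?_
    rw [show a k * Real.exp (-(b k * t)) * (a l * Real.exp (-(b l * t))) * (1 + t) ^ 2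
        = a k * a l * ((1 + t) ^ 2 * (Real.exp (-(b k * t)) * Real.exp (-(b l * t)))) by ring,
      ← Real.exp_add, show -(b k * t) + -(b l * t) = -((b k + b l) * t) by ring]
  have hG2int : IntegrableOn (fun t => G t ^ 2) (Set.Ioi 0) := by
    rw [show (fun t => G t ^ 2)
        = fun t => ∑ k, ∑ l, a k * a l * ((1 + t) ^ 2 * Real.exp (-((b k + b l) * t)))
      from funext hG2]
    exact integrable_finset_sum _ fun k _ =>
      integrable_finset_sum _ fun l _ => (aux_int (hc k l)).const_mul _
  have hG2val : ∫ t in Set.Ioi (0:ℝ), G t ^ 2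
      = ∑ k, ∑ l, a k * a l
          * (1 / (b k + b l) + 2 * (1 / (b k + b l) ^ 2) + 2 * (1 / (b k + b l) ^ 3)) := by
    simp only [hG2]
    rw [MeasureTheory.integral_finset_sum _ fun k _ =>
      integrable_finset_sum _ fun l _ => (aux_int (hc k l)).const_mul _]
    refine Finset.sum_congr rfl fun k _ => ?_
    rw [MeasureTheory.integral_finset_sum _ fun l _ => (aux_int (hc k l)).const_mul _]
    refine Finset.sum_congr rfl fun l _ => ?_
    rw [MeasureTheory.integral_const_mul, aux_val (hc k l)]
  have hHint : IntegrableOn (fun t => H t ^ 2) (Set.Ioi 0) := by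
    rw [hH]; exact Hint
  have hHval : ∫ t in Set.Ioi (0:ℝ), H t ^ 2 = 1 := by
    rw [hH]; exact Hval
  have key : (0:ℝ) ≤ ∫ t in Set.Ioi (0:ℝ), (G t - T * H t) ^ 2 :=
    MeasureTheory.setIntegral_nonneg measurableSet_Ioi fun t _ => sq_nonneg _
  have hexp : ∫ t in Set.Ioi (0:ℝ), (G t - T * H t) ^ 2
      = (∫ t in Set.Ioi (0:ℝ), G t ^ 2) - 2 * T * (∫ t in Set.Ioi (0:ℝ), f t)
        + T ^ 2 * ∫ t in Set.Ioi (0:ℝ), H t ^ 2 := by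
    have hpt : ∀ t ∈ Set.Ioi (0:ℝ),
        (G t - T * H t) ^ 2 = G t ^ 2 - 2 * T * f t + T ^ 2 * H t ^ 2 := by
      intro t ht
      have ht0 : (0:ℝ) < t := ht
      have h1 : (1:ℝ) + t ≠ 0 := by positivity
      have hGH : G t * H t = f t := by
        rw [hG, hH]
        show f t * (1 + t) * (1 + t)⁻¹ = f t
        rw [mul_inv_cancel_right₀ h1]
      calc (G t - T * H t) ^ 2 = G t ^ 2 - 2 * T * (G t * H t) + T ^ 2 * H t ^ 2 := by ring
        _ = _ := by rw [hGH]
    have i2 : IntegrableOn (fun t => 2 * T * f t) (Set.Ioi 0) := hfint.const_mul (2 * T)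
    have i3 : IntegrableOn (fun t => G t ^ 2 - 2 * T * f t) (Set.Ioi 0) := hG2int.sub i2
    have i4 : IntegrableOn (fun t => T ^ 2 * H t ^ 2) (Set.Ioi 0) := hHint.const_mul (T ^ 2)
    rw [MeasureTheory.setIntegral_congr_fun measurableSet_Ioi hpt,
      MeasureTheory.integral_add i3 i4,
      MeasureTheory.integral_sub hG2int i2,
      MeasureTheory.integral_const_mul, MeasureTheory.integral_const_mul]
  rw [hexp, hfval, hHval, hG2val] at key
  have hRHS : (∑ k, ∑ l, a k * a l / (b k + b l) ^ 1) +
      2 * (∑ k, ∑ l, a k * a l / (b k + b l) ^ 2) +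
      2 * (∑ k, ∑ l, a k * a l / (b k + b l) ^ 3)
      = ∑ k, ∑ l, a k * a l
          * (1 / (b k + b l) + 2 * (1 / (b k + b l) ^ 2) + 2 * (1 / (b k + b l) ^ 3)) := by
    simp_rw [Finset.mul_sum, ← Finset.sum_add_distrib]
    exact Finset.sum_congr rfl fun k _ => Finset.sum_congr rfl fun l _ => by ring
  rw [hRHS]
  nlinarith [key]
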